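/- Let K = ℚ(√D) with D ≥ 2 squarefree, with convergents α_i = p_i + q_i ξ_D to ω_D and N_i = |Nm(α_i)|. Writing γ_{i+2} = [u_{i+2}, u_{i+3}, ...] for the tail of the continued fraction of ω_D, one has for all i ≥ -1: N_{i+1} = √Δ/γ_{i+2} - N_i/γ_{i+2}², where Δ is the discriminant of K. Consequently N_i < √Δ/u_{i+1} for all i ≥ -1. -/

import Mathlib

noncomputable section

/-- `ω_D`: the standard generator of the ring of integers of `ℚ(√D)`. -/
def omegaD (D : ℕ) : ℝ := if D % 4 = 1 then (1 + Real.sqrt D) / 2 else Real.sqrt D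

/-- The Galois conjugate of `ω_D`. -/
def omegaD' (D : ℕ) : ℝ := if D % 4 = 1 then (1 - Real.sqrt D) / 2 else -Real.sqrt D

/-- Elements of `O_K` in coordinates: `(x, y)` represents `x + y·ω_D`. -/
abbrev OK : Type := ℤ × ℤ

/-- First real embedding. -/
def emb1 (D : ℕ) (a : OK) : ℝ := a.1 + a.2 * omegaD D

/-- Second real embedding (Galois conjugate). -/
def emb2 (D : ℕ) (a : OK) : ℝ := a.1 + a.2 * omegaD' D

/-- Galois conjugation on `O_K`. -/
def conjOK (D : ℕ) (a : OK) : OK := (a.1 + (if D % 4 = 1 then (1 : ℤ) else 0) * a.2, -a.2)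

/-- Total positivity. -/
def TotPos (D : ℕ) (a : OK) : Prop := 0 < emb1 D a ∧ 0 < emb2 D a

/-- The field norm. -/
def Nm (D : ℕ) (a : OK) : ℝ := emb1 D a * emb2 D a

/-- Indecomposability: totally positive and not a sum of two totally positive elements. -/
def Indec (D : ℕ) (a : OK) : Prop :=
  TotPos D a ∧ ¬ ∃ b c : OK, TotPos D b ∧ TotPos D c ∧ a = b + c

/-- Number of partitions of `α` into indecomposable parts (`p_K(α|I)`). -/
def pKI (D : ℕ) (α : OK) : ℕ :=
  Set.ncard {s : Multiset OK | (∀ x ∈ s, Indec D x) ∧ s.sum = α}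

/-- Number of partitions of `α` into totally positive parts (`p_K(α)`). -/
def pK (D : ℕ) (α : OK) : ℕ :=
  Set.ncard {s : Multiset OK | (∀ x ∈ s, TotPos D x) ∧ s.sum = α}

/-- Discriminant of `ℚ(√D)`. -/
def disc (D : ℕ) : ℕ := if D % 4 = 1 then D else 4 * D

/-- The ordered two-sided sequence of indecomposables together with
the coefficients `v j ≥ 2` from the Hejda–Kala relation `v_j β_j = β_{j-1} + β_{j+1}`. -/
structure BetaSeq (D : ℕ) (β : ℤ → OK) (v : ℤ → ℤ) : Prop where
  indec : ∀ j, Indec D (β j)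
  surj : ∀ a : OK, Indec D a → ∃ j, β j = a
  mono : StrictMono fun j => emb1 D (β j)
  zero : β 0 = (1, 0)
  conj_eq : ∀ j, β (-j) = conjOK D (β j)
  v_two_le : ∀ j, 2 ≤ v j
  v_symm : ∀ j, v (-j) = v j
  rel : ∀ j, v j • β j = β (j - 1) + β (j + 1)

/-- The continued fraction data of `ω_D = [⌈u₀/2⌉, \overline{u₁, …, u_s}]` (with `u_s = u_0`),
with tails `γ_0 = ω_D`, `γ_i = [u_i, u_{i+1}, …]` for `i ≥ 1`. -/
structure CFData (D : ℕ) (u : ℕ → ℕ) (γ : ℕ → ℝ) : Prop where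
  gamma_zero : γ 0 = omegaD D
  u_zero : (u 0 : ℤ) = 2 * ⌊omegaD D⌋ - (if D % 4 = 1 then 1 else 0)
  head : omegaD D = (⌊omegaD D⌋ : ℝ) + 1 / γ 1
  step : ∀ i, 1 ≤ i → γ i = u i + 1 / γ (i + 1)
  one_lt : ∀ i, 1 ≤ i → 1 < γ i
  floor_eq : ∀ i, 1 ≤ i → (u i : ℤ) = ⌊γ i⌋
  period : ∃ s, 1 ≤ s ∧ u s = u 0 ∧ ∀ i, 1 ≤ i → u (i + s) = u i

/-- The convergents `α_i = p_i + q_i ξ_D`, indexed by `i ≥ -1`. -/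
structure ConvData (D : ℕ) (u : ℕ → ℕ) (a : ℤ → OK) : Prop where
  neg_one : a (-1) = (1, 0)
  zero : a 0 = (⌊omegaD D⌋, 0) + (if D % 4 = 1 then ((-1 : ℤ), (1 : ℤ)) else (0, 1))
  recur : ∀ i : ℤ, -1 ≤ i → a (i + 2) = (u (i + 2).toNat : ℤ) • a (i + 1) + a i

/-- Semiconvergents `α_{i,r} = α_i + r·α_{i+1}`. -/
def semiconv (a : ℤ → OK) (i r : ℤ) : OK := a i + r • a (i + 1)

/-- `N_{i+1} = √Δ/γ_{i+2} - N_i/γ_{i+2}²` and `N_i < √Δ/u_{i+1}`. -/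

lemma emb1_combo (D : ℕ) (n : ℤ) (b c : OK) :
    emb1 D (n • b + c) = n * emb1 D b + emb1 D c := by
  simp only [emb1, Prod.fst_add, Prod.snd_add, Prod.smul_fst, Prod.smul_snd, smul_eq_mul]
  push_cast; ring

lemma emb2_combo (D : ℕ) (n : ℤ) (b c : OK) :
    emb2 D (n • b + c) = n * emb2 D b + emb2 D c := by
  simp only [emb2, Prod.fst_add, Prod.snd_add, Prod.smul_fst, Prod.smul_snd, smul_eq_mul]
  push_cast; ring

theorem stmt7 (D : ℕ) (hD : 2 ≤ D) (hsq : Squarefree D)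
    (u : ℕ → ℕ) (γ : ℕ → ℝ) (hCF : CFData D u γ)
    (a : ℤ → OK) (hconv : ConvData D u a) :
    (∀ i : ℤ, -1 ≤ i →
      |Nm D (a (i + 1))| =
        Real.sqrt (disc D) / γ (i + 2).toNat - |Nm D (a i)| / (γ (i + 2).toNat) ^ 2) ∧
    (∀ i : ℤ, -1 ≤ i →
      |Nm D (a i)| < Real.sqrt (disc D) / (u (i + 1).toNat : ℝ)) := by
  set ω := omegaD D with hω
  set Δ := Real.sqrt (disc D) with hΔdef
  have hDR : (1:ℝ) ≤ Real.sqrt D := Real.one_le_sqrt.mpr (by exact_mod_cast hD.trans' one_le_two)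
  have hω1 : 1 ≤ ω := by
    unfold ω; unfold omegaD; split <;> nlinarith [hDR]
  have hfl1 : (1:ℤ) ≤ ⌊ω⌋ := by
    have := Int.le_floor.mpr (by exact_mod_cast hω1 : ((1:ℤ):ℝ) ≤ ω); exact this
  have hγpos : ∀ k : ℕ, 1 ≤ k → 0 < γ k := fun k hk => lt_trans one_pos (hCF.one_lt k hk)
  have hγ1 : 0 < γ 1 := hγpos 1 le_rfl
  have hflω : (⌊ω⌋ : ℝ) < ω := by
    have h1 : 0 < 1 / γ 1 := by positivity
    nlinarith [hCF.head]
  have hΔ : Δ = 2 * ω - (if D % 4 = 1 then 1 else 0) := by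
    unfold Δ ω; unfold omegaD disc
    split
    · push_cast; ring
    · push_cast
      rw [show ((4:ℝ) * D) = (2:ℝ)^2 * D by ring, Real.sqrt_mul (by positivity),
        Real.sqrt_sq (by norm_num)]
      ring
  have hΔpos : 0 < Δ := by
    rw [hΔ]; split <;> nlinarith [hflω, hfl1]
  -- the main induction
  have key : ∀ n : ℕ,
      emb2 D (a (n : ℤ)) * γ (n + 1) = - emb2 D (a ((n : ℤ) - 1)) ∧
      0 < emb1 D (a ((n : ℤ) - 1)) ∧ 0 < emb1 D (a (n : ℤ)) ∧
      (emb1 D (a (n : ℤ)) * γ (n + 1) + emb1 D (a ((n : ℤ) - 1))) *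
          |emb2 D (a ((n : ℤ) - 1))| = Δ * γ (n + 1) := by
    intro n
    induction n with
    | zero =>
      have ha1 : a (-1) = (1, 0) := hconv.neg_one
      have ha0 := hconv.zero
      have he2m1 : emb2 D (a (-1)) = 1 := by
        norm_num [ha1, emb2]
      have he1m1 : emb1 D (a (-1)) = 1 := by
        norm_num [ha1, emb1]
      have he20 : emb2 D (a 0) = (⌊ω⌋ : ℝ) - ω := by
        rw [ha0]; unfold emb2 omegaD' ; unfold ω; unfold omegaD
        split <;> (simp only [Prod.fst_add, Prod.snd_add]; push_cast; ring)
      have he10 : emb1 D (a 0) = Δ + ((⌊ω⌋:ℝ) - ω) := by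
        rw [ha0, hΔ]; unfold emb1; unfold ω; unfold omegaD
        split <;> (simp only [Prod.fst_add, Prod.snd_add]; push_cast; ring)
      have hhead : (⌊ω⌋ : ℝ) - ω = - (1 / γ 1) := by
        have := hCF.head; unfold ω; linarith [hCF.head]
      refine ⟨?_, by push_cast; norm_num [he1m1], ?_, ?_⟩
      · push_cast
        rw [he20, he2m1, hhead]
        field_simp
      · push_cast; rw [he10, hhead]
        have h1γ : 1 / γ 1 < 1 := by
          rw [div_lt_one hγ1]; exact hCF.one_lt 1 le_rfl
        have hΔ1 : 1 < Δ := by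
          rw [hΔ]; split <;> nlinarith [hflω, hfl1,
            (by exact_mod_cast hfl1 : (1:ℝ) ≤ (⌊ω⌋:ℝ))]
        linarith
      · push_cast
        rw [he10, he2m1, he1m1, hhead, abs_one]
        field_simp; ring
    | succ n ih =>
      obtain ⟨hA, hY0, hY1, hC⟩ := ih
      have hrec := hconv.recur ((n : ℤ) - 1) (by omega)
      have hidx : ((n : ℤ) - 1 + 2) = ((n + 1 : ℕ) : ℤ) := by push_cast; ring
      have hidx2 : ((n : ℤ) - 1 + 2).toNat = n + 1 := by omega
      rw [hidx2, hidx] at hrec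
      have hidx3 : ((n : ℤ) - 1 + 1) = (n : ℤ) := by ring
      rw [hidx3] at hrec
      have hx2 : emb2 D (a ((n+1 : ℕ) : ℤ)) =
          (u (n+1) : ℝ) * emb2 D (a (n : ℤ)) + emb2 D (a ((n:ℤ) - 1)) := by
        rw [hrec, emb2_combo]; push_cast; ring
      have hy2 : emb1 D (a ((n+1 : ℕ) : ℤ)) =
          (u (n+1) : ℝ) * emb1 D (a (n : ℤ)) + emb1 D (a ((n:ℤ) - 1)) := by
        rw [hrec, emb1_combo]; push_cast; ring
      have hstep : γ (n+1) = u (n+1) + 1 / γ (n + 2) := hCF.step (n+1) (by omega)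
      have hg1 : 0 < γ (n+1) := hγpos (n+1) (by omega)
      have hg2 : 0 < γ (n+2) := hγpos (n+2) (by omega)
      have hidx4 : ((n+1:ℕ):ℤ) - 1 = (n : ℤ) := by push_cast; ring
      have hXrel : emb2 D (a ((n:ℤ) - 1)) = - emb2 D (a (n : ℤ)) * γ (n+1) := by
        linarith [hA]
      have hγγ : γ (n+1) * γ (n+2) = (u (n+1) : ℝ) * γ (n+2) + 1 := by
        rw [hstep]; field_simp
      refine ⟨?_, ?_, ?_, ?_⟩
      · rw [show (n+1+1 : ℕ) = n + 2 from rfl, hidx4, hx2, hXrel]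
        linear_combination (-(emb2 D (a (n:ℤ)))) * hγγ
      · rw [hidx4]; exact hY1
      · rw [hy2]
        have hu0 : (0:ℝ) ≤ (u (n+1) : ℝ) := by positivity
        nlinarith [hY0, hY1, hu0]
      · rw [show (n+1+1 : ℕ) = n + 2 from rfl, hidx4, hy2]
        have habs : |emb2 D (a (n:ℤ))| = |emb2 D (a ((n:ℤ) - 1))| / γ (n+1) := by
          rw [hXrel, abs_mul, abs_neg, abs_of_pos hg1]
          field_simp
        rw [habs, ← mul_div_assoc, div_eq_iff (ne_of_gt hg1)]
        linear_combination (γ (n+2)) * hC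
          - emb1 D (a (n:ℤ)) * |emb2 D (a ((n:ℤ) - 1))| * hγγ
  -- auxiliary: extract the pieces at integer index
  have keyI : ∀ i : ℤ, -1 ≤ i →
      emb2 D (a (i + 1)) * γ (i + 2).toNat = - emb2 D (a i) ∧
      0 < emb1 D (a i) ∧ 0 < emb1 D (a (i + 1)) ∧
      (emb1 D (a (i+1)) * γ (i+2).toNat + emb1 D (a i)) * |emb2 D (a i)| =
        Δ * γ (i+2).toNat := by
    intro i hi
    obtain ⟨n, rfl⟩ : ∃ n : ℕ, i = (n : ℤ) - 1 := ⟨(i+1).toNat, by omega⟩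
    have h1 : ((n:ℤ) - 1 + 1) = (n : ℤ) := by ring
    have h2 : ((n:ℤ) - 1 + 2).toNat = n + 1 := by omega
    rw [h1, h2]
    exact (key n)
  have main1 : ∀ i : ℤ, -1 ≤ i →
      |Nm D (a (i + 1))| =
        Δ / γ (i + 2).toNat - |Nm D (a i)| / (γ (i + 2).toNat) ^ 2 := by
    intro i hi
    obtain ⟨hA, hY0, hY1, hC⟩ := keyI i hi
    have hg : 0 < γ (i+2).toNat := hγpos _ (by omega)
    have hN1 : |Nm D (a (i+1))| = |emb2 D (a (i+1))| * emb1 D (a (i+1)) := by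
      unfold Nm; rw [abs_mul, abs_of_pos hY1, mul_comm]
    have hN0 : |Nm D (a i)| = |emb2 D (a i)| * emb1 D (a i) := by
      unfold Nm; rw [abs_mul, abs_of_pos hY0, mul_comm]
    have habs : |emb2 D (a (i+1))| = |emb2 D (a i)| / γ (i+2).toNat := by
      have : emb2 D (a (i+1)) = - emb2 D (a i) / γ (i+2).toNat := by
        field_simp; linarith [hA]
      rw [this, abs_div, abs_neg, abs_of_pos hg]
    have hgne : (γ (i+2).toNat : ℝ) ≠ 0 := ne_of_gt hg
    have h7 : |emb2 D (a i)| * emb1 D (a (i+1)) * γ (i+2).toNat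
        = Δ * γ (i+2).toNat - |emb2 D (a i)| * emb1 D (a i) := by
      linear_combination hC
    have h8 : |emb2 D (a i)| / γ (i+2).toNat * emb1 D (a (i+1))
        = (|emb2 D (a i)| * emb1 D (a (i+1)) * γ (i+2).toNat) / (γ (i+2).toNat)^2 := by
      field_simp
    rw [hN1, hN0, habs, h8, h7, sub_div, pow_two, mul_div_mul_right _ _ hgne]
  refine ⟨main1, ?_⟩
  intro i hi
  rcases eq_or_lt_of_le hi with h | h
  · -- i = -1
    have ha1 : a (-1) = (1,0) := hconv.neg_one
    have hN : |Nm D (a i)| = 1 := by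
      rw [← h, ha1]; norm_num [Nm, emb1, emb2]
    have hidx : (i + 1).toNat = 0 := by omega
    rw [hN, hidx]
    have hu0 : ((u 0 : ℕ) : ℝ) = 2 * (⌊ω⌋:ℝ) - (if D % 4 = 1 then 1 else 0) := by
      have := hCF.u_zero
      have : ((u 0 : ℕ) : ℝ) = ((2 * ⌊omegaD D⌋ - (if D % 4 = 1 then 1 else 0) : ℤ) : ℝ) := by
        exact_mod_cast congrArg (fun z : ℤ => (z : ℝ)) this
      rw [this]; push_cast; split <;> ring
    have hu0pos : (0:ℝ) < (u 0 : ℝ) := by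
      rw [hu0]; split <;> [skip; skip] <;>
        (have : (1:ℝ) ≤ (⌊ω⌋:ℝ) := by exact_mod_cast hfl1) <;> linarith
    rw [lt_div_iff₀ hu0pos, one_mul, hΔ, hu0]
    split <;> linarith [hflω]
  · -- i ≥ 0
    have hi0 : 0 ≤ i := by omega
    have hident := main1 (i - 1) (by omega)
    rw [show i - 1 + 1 = i from by ring, show i - 1 + 2 = i + 1 from by ring] at hident
    have hm1 : 1 ≤ (i+1).toNat := by omega
    have hg : 1 < γ (i+1).toNat := hCF.one_lt _ hm1
    have hstep := hCF.step _ hm1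
    have hg2 : 0 < γ ((i+1).toNat + 1) := hγpos _ (by omega)
    have hugt : (u (i+1).toNat : ℝ) < γ (i+1).toNat := by
      rw [hstep]
      have : 0 < 1 / γ ((i+1).toNat + 1) := by positivity
      linarith
    have hu1 : (1:ℝ) ≤ (u (i+1).toNat : ℝ) := by
      have hfl := hCF.floor_eq _ hm1
      have : (1:ℤ) ≤ ⌊γ (i+1).toNat⌋ := by
        apply Int.le_floor.mpr; exact_mod_cast hg.le
      have : (1:ℤ) ≤ (u (i+1).toNat : ℤ) := by rw [hfl]; exact this
      exact_mod_cast this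
    have hNle : |Nm D (a i)| ≤ Δ / γ (i+1).toNat := by
      rw [hident]
      have : 0 ≤ |Nm D (a (i-1))| / (γ (i+1).toNat)^2 := by positivity
      linarith
    have : Δ / γ (i+1).toNat < Δ / (u (i+1).toNat : ℝ) := by
      apply div_lt_div_of_pos_left hΔpos (by linarith) hugt
    linarith
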